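/- arXiv:0808.3884 — 2 statements merged into one kernel-verified Lean document; each statement's English description precedes it below -/
import Mathlib

section
/- If every connective occurring in the formulae of a default theory ⟨W,D⟩ is monotone, then ⟨W,D⟩ has at most one stable extension. -/
inductive Form : Type where
  | var : ℕ → Form
  | app : (n : ℕ) → ((Fin n → Bool) → Bool) → (Fin n → Form) → Form

namespace Form

def eval (σ : ℕ → Bool) : Form → Bool
  | var x => σ x
  | app _ f a => f (fun i => (a i).eval σ)

def tru : Form := app 0 (fun _ => true) (fun i => i.elim0)
def fls : Form := app 0 (fun _ => false) (fun i => i.elim0)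
def neg (φ : Form) : Form := app 1 (fun v => !(v 0)) (fun _ => φ)
def conj (φ ψ : Form) : Form := app 2 (fun v => v 0 && v 1) ![φ, ψ]
def disj (φ ψ : Form) : Form := app 2 (fun v => v 0 || v 1) ![φ, ψ]

end Form

/-- σ satisfies all formulae of A. -/
def Sat (σ : ℕ → Bool) (A : Set Form) : Prop := ∀ φ ∈ A, φ.eval σ = true

/-- Semantic consequence A ⊨ φ. -/
def Entails (A : Set Form) (φ : Form) : Prop := ∀ σ, Sat σ A → φ.eval σ = true

/-- Th(A) = {φ | A ⊨ φ}. -/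
def Th (A : Set Form) : Set Form := {φ | Entails A φ}

def Consistent (A : Set Form) : Prop := ∃ σ, Sat σ A

/-- A default rule (α : β / γ). -/
structure Default where
  pre : Form
  just : Form
  con : Form

/-- S contains W, is deductively closed, and closed under defaults applicable w.r.t. E. -/
def GammaClosed (W : Set Form) (D : Set Default) (E S : Set Form) : Prop :=
  W ⊆ S ∧ Th S = S ∧ ∀ d ∈ D, d.pre ∈ S → Form.neg d.just ∉ E → d.con ∈ S

/-- Γ(E): the smallest set satisfying the three closure conditions. -/
def Gamma (W : Set Form) (D : Set Default) (E : Set Form) : Set Form :=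
  ⋂₀ {S | GammaClosed W D E S}

/-- E is a stable extension of ⟨W,D⟩. -/
def Stable (W : Set Form) (D : Set Default) (E : Set Form) : Prop :=
  Gamma W D E = E

inductive UsesOnly (P : ∀ n, ((Fin n → Bool) → Bool) → Prop) : Form → Prop
  | var (x : ℕ) : UsesOnly P (Form.var x)
  | app {n : ℕ} {f : (Fin n → Bool) → Bool} {a : Fin n → Form} :
      P n f → (∀ i, UsesOnly P (a i)) → UsesOnly P (Form.app n f a)

/-- f is monotone. -/
def MonoFun : ∀ n : ℕ, ((Fin n → Bool) → Bool) → Prop :=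
  fun _ f => ∀ a b, (∀ i, a i ≤ b i) → f a ≤ f b

section Aux

lemma eval_mono {φ : Form} (h : UsesOnly MonoFun φ) {σ τ : ℕ → Bool}
    (hστ : ∀ x, σ x ≤ τ x) : φ.eval σ ≤ φ.eval τ := by
  induction h with
  | var x => exact hστ x
  | app hf ha ih => exact hf _ _ (fun i => ih i)

lemma eval_mono_top {φ : Form} (h : UsesOnly MonoFun φ) {σ : ℕ → Bool}
    (hσ : φ.eval σ = true) : φ.eval (fun _ => true) = true := by
  have := eval_mono h (σ := σ) (τ := fun _ => true) (fun x => Bool.le_true _)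
  rw [hσ] at this
  exact le_antisymm (Bool.le_true _) this

lemma th_mono {A B : Set Form} (h : A ⊆ B) : Th A ⊆ Th B :=
  fun _ hφ σ hσ => hφ σ (fun ψ hψ => hσ ψ (h hψ))

lemma subset_th (A : Set Form) : A ⊆ Th A := fun φ hφ σ hσ => hσ φ hφ

lemma th_th (A : Set Form) : Th (Th A) = Th A := by
  apply Set.Subset.antisymm
  · intro φ hφ σ hσ
    exact hφ σ (fun ψ hψ => hψ σ hσ)
  · exact subset_th _

lemma gamma_subset {W D E S} (hS : GammaClosed W D E S) : Gamma W D E ⊆ S :=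
  fun φ hφ => hφ S hS

lemma gammaClosed_gamma (W : Set Form) (D : Set Default) (E : Set Form) :
    GammaClosed W D E (Gamma W D E) := by
  refine ⟨?_, ?_, ?_⟩
  · intro φ hφ S hS; exact hS.1 hφ
  · apply Set.Subset.antisymm
    · intro φ hφ S hS
      rw [← hS.2.1]
      exact fun σ hσ => hφ σ (fun ψ hψ => hσ ψ (hψ S hS))
    · exact subset_th _
  · intro d hd hpre hjust S hS
    exact hS.2.2 d hd (hpre S hS) hjust

lemma stable_closed {W D E} (h : Stable W D E) : GammaClosed W D E E := by
  have := gammaClosed_gamma W D E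
  rwa [h] at this

lemma stable_consistent {W : Set Form} {D : Set Default} {E : Set Form}
    (hWc : Consistent W) (h : Stable W D E) : Consistent E := by
  by_contra hc
  have hEuniv : E = Set.univ := by
    have : Th E = E := (stable_closed h).2.1
    rw [← this]
    apply Set.eq_univ_of_forall
    intro φ σ hσ
    exact absurd ⟨σ, hσ⟩ hc
  have hsub : Gamma W D E ⊆ Th W := by
    apply gamma_subset
    refine ⟨subset_th _, th_th _, ?_⟩
    intro d _ _ hj
    exact absurd (hEuniv ▸ Set.mem_univ _) hj
  obtain ⟨σ, hσ⟩ := hWc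
  have hfls : Form.fls ∈ Th W := hsub (by rw [h, hEuniv]; exact Set.mem_univ _)
  have := hfls σ hσ
  simp [Form.fls, Form.eval] at this

lemma stable_sat_top {W : Set Form} {D : Set Default} {E : Set Form}
    (hWc : Consistent W)
    (hW : ∀ φ ∈ W, UsesOnly MonoFun φ)
    (hDc : ∀ d ∈ D, UsesOnly MonoFun d.pre ∧ UsesOnly MonoFun d.just ∧ UsesOnly MonoFun d.con)
    (h : Stable W D E) : Sat (fun _ => true) E := by
  obtain ⟨σE, hσE⟩ := stable_consistent hWc h
  obtain ⟨σW, hσW⟩ := hWc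
  have hE := stable_closed h
  set S₁ : Set Form := {φ | φ.eval (fun _ => true) = true} with hS₁def
  have hclosed : GammaClosed W D E (E ∩ S₁) := by
    refine ⟨?_, ?_, ?_⟩
    · intro φ hφ
      exact ⟨hE.1 hφ, eval_mono_top (hW φ hφ) (hσW φ hφ)⟩
    · apply Set.Subset.antisymm
      · intro φ hφ
        constructor
        · rw [← hE.2.1]
          exact th_mono Set.inter_subset_left hφ
        · exact hφ (fun _ => true) (fun ψ hψ => hψ.2)
      · exact subset_th _
    · intro d hd hpre hjust
      have hcon : d.con ∈ E := hE.2.2 d hd hpre.1 hjust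
      exact ⟨hcon, eval_mono_top (hDc d hd).2.2 (hσE _ hcon)⟩
  have : E ⊆ E ∩ S₁ := by
    conv_lhs => rw [← h]
    exact gamma_subset hclosed
  intro φ hφ
  exact (this hφ).2

lemma stable_neg_iff {W : Set Form} {D : Set Default} {E : Set Form}
    (hWc : Consistent W)
    (hW : ∀ φ ∈ W, UsesOnly MonoFun φ)
    (hDc : ∀ d ∈ D, UsesOnly MonoFun d.pre ∧ UsesOnly MonoFun d.just ∧ UsesOnly MonoFun d.con)
    (h : Stable W D E) {d : Default} (hd : d ∈ D) :
    Form.neg d.just ∈ E ↔ d.just.eval (fun _ => true) = false := by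
  constructor
  · intro hmem
    have := stable_sat_top hWc hW hDc h _ hmem
    simp [Form.neg, Form.eval] at this
    exact this
  · intro hfalse
    have htaut : ∀ σ, (Form.neg d.just).eval σ = true := by
      intro σ
      have hle := eval_mono (hDc d hd).2.1 (σ := σ) (τ := fun _ => true)
        (fun x => Bool.le_true _)
      rw [hfalse] at hle
      have : d.just.eval σ = false := by
        revert hle; cases d.just.eval σ <;> simp
      simp [Form.neg, Form.eval, this]
    rw [← (stable_closed h).2.1]
    exact fun σ _ => htaut σ

end Aux

/-- If every connective occurring in ⟨W,D⟩ is monotone, then ⟨W,D⟩ has at most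
one stable extension. -/
theorem stmt8 (W : Set Form) (D : Set Default) (hD : D.Finite)
    (hW : ∀ φ ∈ W, UsesOnly MonoFun φ)
    (hDc : ∀ d ∈ D, UsesOnly MonoFun d.pre ∧ UsesOnly MonoFun d.just ∧ UsesOnly MonoFun d.con) :
    ∀ E₁ E₂ : Set Form, Stable W D E₁ → Stable W D E₂ → E₁ = E₂ := by
  intro E₁ E₂ h₁ h₂
  by_cases hWc : Consistent W
  · have key : ∀ d ∈ D, (Form.neg d.just ∈ E₁ ↔ Form.neg d.just ∈ E₂) := fun d hd =>
      (stable_neg_iff hWc hW hDc h₁ hd).trans (stable_neg_iff hWc hW hDc h₂ hd).symm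
    have hsets : {S | GammaClosed W D E₁ S} = {S | GammaClosed W D E₂ S} := by
      ext S
      simp only [Set.mem_setOf_eq]
      unfold GammaClosed
      constructor
      · rintro ⟨a, b, c⟩
        exact ⟨a, b, fun d hd hp hj => c d hd hp (fun m => hj ((key d hd).mp m))⟩
      · rintro ⟨a, b, c⟩
        exact ⟨a, b, fun d hd hp hj => c d hd hp (fun m => hj ((key d hd).mpr m))⟩
    have hG : Gamma W D E₁ = Gamma W D E₂ := by
      unfold Gamma; rw [hsets]
    rw [← h₁, ← h₂, hG]
  · have huniv : ∀ E, Stable W D E → E = Set.univ := by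
      intro E hE
      apply Set.eq_univ_of_forall
      intro φ
      rw [← (stable_closed hE).2.1]
      intro σ hσ
      exact absurd ⟨σ, fun ψ hψ => hσ ψ ((stable_closed hE).1 hψ)⟩ hWc
    rw [huniv E₁ h₁, huniv E₂ h₂]
end

section
/- Let φ be a propositional formula over variables x₁,…,x_{i−1}, z₁,…,z_m, and let ψ be obtained from φ (assumed in CNF) by replacing every negative literal ¬x_j by a fresh variable x'_j and every ¬z_j by a fresh variable z'_j, and conjoining the clauses (x_j ∨ x'_j) for j < i and (z_j ∨ z'_j) for j ≤ m. Then for all truth values c₁,…,c_{i−1}: φ[x₁/c₁,…,x_{i−1}/c_{i−1}] is unsatisfiable if and only if every model σ of ψ[x₁/c₁,…,x_{i−1}/c_{i−1}, x'₁/¬c₁,…,x'_{i−1}/¬c_{i−1}] satisfies z_j ∧ z'_j for some 1 ≤ j ≤ m. -/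
def bigConj (l : List Form) : Form := l.foldr Form.conj Form.tru
def bigDisj (l : List Form) : Form := l.foldr Form.disj Form.fls

-- Variables: x_j is 4j, its primed copy x'_j is 4j+1, z_j is 4j+2, z'_j is 4j+3.

/-- Literal of the original CNF formula φ: over x- and z-variables. -/
def litPhi (k : ℕ) (l : Bool × (Fin k ⊕ ℕ)) : Form :=
  match l.2 with
  | Sum.inl j => if l.1 then Form.var (4 * j) else Form.neg (Form.var (4 * j))
  | Sum.inr j => if l.1 then Form.var (4 * j + 2) else Form.neg (Form.var (4 * j + 2))

/-- Literal of ψ: negative literals are replaced by fresh primed variables. -/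
def litPsi (k : ℕ) (l : Bool × (Fin k ⊕ ℕ)) : Form :=
  match l.2 with
  | Sum.inl j => if l.1 then Form.var (4 * j) else Form.var (4 * j + 1)
  | Sum.inr j => if l.1 then Form.var (4 * j + 2) else Form.var (4 * j + 3)

/-- φ in CNF over x_1,…,x_{k}, z_1,…,z_m (clauses as lists of literals). -/
def phiCNF (k m : ℕ) (C : List (List (Bool × (Fin k ⊕ Fin m)))) : Form :=
  bigConj (C.map fun c => bigDisj (c.map fun l => litPhi k (l.1, l.2.map id Fin.val)))

/-- ψ: φ with negative literals replaced by primed variables, conjoined with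
(x_j ∨ x'_j) and (z_j ∨ z'_j). -/
def psiForm (k m : ℕ) (C : List (List (Bool × (Fin k ⊕ Fin m)))) : Form :=
  Form.conj (bigConj (C.map fun c => bigDisj (c.map fun l => litPsi k (l.1, l.2.map id Fin.val))))
    (Form.conj
      (bigConj ((List.finRange k).map fun j =>
        Form.disj (Form.var (4 * j)) (Form.var (4 * j + 1))))
      (bigConj ((List.finRange m).map fun j =>
        Form.disj (Form.var (4 * j + 2)) (Form.var (4 * j + 3)))))

@[simp] lemma Form.eval_conj (σ : ℕ → Bool) (a b : Form) :
    (Form.conj a b).eval σ = (a.eval σ && b.eval σ) := rfl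
@[simp] lemma Form.eval_disj (σ : ℕ → Bool) (a b : Form) :
    (Form.disj a b).eval σ = (a.eval σ || b.eval σ) := rfl
@[simp] lemma Form.eval_neg (σ : ℕ → Bool) (a : Form) :
    (Form.neg a).eval σ = !(a.eval σ) := rfl
@[simp] lemma Form.eval_tru (σ : ℕ → Bool) : Form.tru.eval σ = true := rfl
@[simp] lemma Form.eval_fls (σ : ℕ → Bool) : Form.fls.eval σ = false := rfl

lemma eval_bigConj (σ : ℕ → Bool) (l : List Form) :
    (bigConj l).eval σ = true ↔ ∀ φ ∈ l, φ.eval σ = true := by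
  induction l with
  | nil => simp [bigConj]
  | cons a l ih => simp [bigConj] at ih ⊢; simp [ih]

lemma eval_bigDisj (σ : ℕ → Bool) (l : List Form) :
    (bigDisj l).eval σ = true ↔ ∃ φ ∈ l, φ.eval σ = true := by
  induction l with
  | nil => simp [bigDisj]
  | cons a l ih => simp [bigDisj] at ih ⊢; simp [ih]

lemma lit_eval {k m : ℕ} (σ τ : ℕ → Bool)
    (hx0 : ∀ j : Fin k, σ (4 * j) = τ (4 * j))
    (hx1 : ∀ j : Fin k, σ (4 * j + 1) = !τ (4 * j))
    (hz0 : ∀ j : Fin m, σ (4 * j + 2) = τ (4 * j + 2))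
    (hz1 : ∀ j : Fin m, σ (4 * j + 3) = !τ (4 * j + 2))
    (l : Bool × (Fin k ⊕ Fin m)) :
    (litPsi k (l.1, l.2.map id Fin.val)).eval σ
      = (litPhi k (l.1, l.2.map id Fin.val)).eval τ := by
  obtain ⟨b, s⟩ := l
  cases s with
  | inl j => cases b <;> simp [litPsi, litPhi, Form.eval, hx0 j, hx1 j]
  | inr j => cases b <;> simp [litPsi, litPhi, Form.eval, hz0 j, hz1 j]

/-- φ[x/c] is unsatisfiable iff every model of ψ[x/c, x'/¬c] satisfies
z_j ∧ z'_j for some j. -/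
theorem stmt16 (k m : ℕ) (C : List (List (Bool × (Fin k ⊕ Fin m))))
    (c : Fin k → Bool) :
    (¬ ∃ σ : ℕ → Bool, (∀ j : Fin k, σ (4 * j) = c j) ∧
        (phiCNF k m C).eval σ = true) ↔
    (∀ σ : ℕ → Bool,
      (∀ j : Fin k, σ (4 * j) = c j ∧ σ (4 * j + 1) = !(c j)) →
      (psiForm k m C).eval σ = true →
      ∃ j : Fin m, σ (4 * j + 2) = true ∧ σ (4 * j + 3) = true) := by
  constructor
  · intro h σ hx hψ
    by_contra hz
    push_neg at hz
    simp only [psiForm, Form.eval_conj, Bool.and_eq_true] at hψ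
    obtain ⟨h1, h2, h3⟩ := hψ
    rw [eval_bigConj] at h1 h3
    have hz1 : ∀ j : Fin m, σ (4 * j + 3) = !σ (4 * j + 2) := by
      intro j
      have hd := h3 (Form.disj (Form.var (4 * (j : ℕ) + 2)) (Form.var (4 * (j : ℕ) + 3)))
        (by simp)
      simp only [Form.eval_disj, Form.eval, Bool.or_eq_true] at hd
      have := hz j
      cases h2' : σ (4 * j + 2) <;> cases h3' : σ (4 * j + 3) <;> simp_all
    refine h ⟨σ, fun j => (hx j).1, ?_⟩
    simp only [phiCNF, eval_bigConj]
    intro φ hφ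
    simp only [List.mem_map] at hφ
    obtain ⟨cl, hcl, rfl⟩ := hφ
    have hcls := h1 _ (List.mem_map_of_mem hcl)
    rw [eval_bigDisj] at hcls ⊢
    obtain ⟨ψl, hψl, hev⟩ := hcls
    simp only [List.mem_map] at hψl
    obtain ⟨l, hl, rfl⟩ := hψl
    refine ⟨_, List.mem_map_of_mem hl, ?_⟩
    rw [← lit_eval σ σ (fun _ => rfl)
      (fun j => by rw [(hx j).2, (hx j).1]) (fun _ => rfl) hz1]
    exact hev
  · intro h hc
    obtain ⟨σ, hx, hφ⟩ := hc
    set σ' : ℕ → Bool :=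
      fun n => if n % 4 = 1 ∨ n % 4 = 3 then !σ (n - 1) else σ n with hσ'
    have e0 : ∀ j : ℕ, σ' (4 * j) = σ (4 * j) := by
      intro j
      have h0 : (4 * j) % 4 = 0 := by omega
      simp [hσ', h0]
    have e1 : ∀ j : ℕ, σ' (4 * j + 1) = !σ (4 * j) := by
      intro j
      have h0 : (4 * j + 1) % 4 = 1 := by omega
      simp [hσ', h0]
    have e2 : ∀ j : ℕ, σ' (4 * j + 2) = σ (4 * j + 2) := by
      intro j
      have h0 : (4 * j + 2) % 4 = 2 := by omega
      simp [hσ', h0]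
    have e3 : ∀ j : ℕ, σ' (4 * j + 3) = !σ (4 * j + 2) := by
      intro j
      have h0 : (4 * j + 3) % 4 = 3 := by omega
      have h1 : 4 * j + 3 - 1 = 4 * j + 2 := by omega
      simp [hσ', h0, h1]
    have hψ : (psiForm k m C).eval σ' = true := by
      simp only [psiForm, Form.eval_conj, Bool.and_eq_true]
      refine ⟨?_, ?_, ?_⟩
      · rw [eval_bigConj]
        intro φ hφm
        simp only [List.mem_map] at hφm
        obtain ⟨cl, hcl, rfl⟩ := hφm
        simp only [phiCNF, eval_bigConj] at hφ
        have hcls := hφ _ (List.mem_map_of_mem hcl)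
        rw [eval_bigDisj] at hcls ⊢
        obtain ⟨φl, hφl, hev⟩ := hcls
        simp only [List.mem_map] at hφl
        obtain ⟨l, hl, rfl⟩ := hφl
        refine ⟨_, List.mem_map_of_mem hl, ?_⟩
        rw [lit_eval σ' σ (fun j => e0 j) (fun j => e1 j)
          (fun j => e2 j) (fun j => e3 j)]
        exact hev
      · rw [eval_bigConj]
        intro φ hφm
        simp only [List.mem_map] at hφm
        obtain ⟨j, _, rfl⟩ := hφm
        simp [Form.eval, e0 j, e1 j]
      · rw [eval_bigConj]
        intro φ hφm
        simp only [List.mem_map] at hφm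
        obtain ⟨j, _, rfl⟩ := hφm
        simp [Form.eval, e2 j, e3 j]
    obtain ⟨j, hj2, hj3⟩ := h σ'
      (fun j => ⟨by rw [e0 j, hx j], by rw [e1 j, hx j]⟩) hψ
    rw [e2 j] at hj2
    rw [e3 j, hj2] at hj3
    simp at hj3
end
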